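/- Let 0 ≤ α < 1 and θ > 0, and let (P_i)_{i≥1} be a GEM(α, θ) stick-breaking sequence. Then ∑_{i=1}^∞ E[P_i²] = (1 − α)/(1 + θ). (For the parameters α = χ/(χ+ρ), θ = ρ/(χ+ρ) arising from linear preferential attachment with weights w_k = χk + ρ, this value equals ρ/(χ + 2ρ).) -/

import Mathlib

open MeasureTheory ProbabilityTheory Finset
open scoped ENNReal NNReal

/-- The Beta(a, b) distribution on ℝ (supported on `(0,1)`), with density
`Γ(a+b)/(Γ(a)Γ(b)) x^(a-1) (1-x)^(b-1)` with respect to Lebesgue measure. -/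
noncomputable def betaMeasure (a b : ℝ) : Measure ℝ :=
  (volume.restrict (Set.Ioo (0 : ℝ) 1)).withDensity fun x =>
    ENNReal.ofReal
      (Real.Gamma (a + b) / (Real.Gamma a * Real.Gamma b) * x ^ (a - 1) * (1 - x) ^ (b - 1))

lemma realBeta (a b : ℝ) (ha : 0 < a) (hb : 0 < b) :
    ∫ x in Set.Ioo (0:ℝ) 1, x ^ (a-1) * (1-x) ^ (b-1) =
      Real.Gamma a * Real.Gamma b / Real.Gamma (a+b) := by
  have key : Complex.betaIntegral a b
      = ((∫ x in Set.Ioo (0:ℝ) 1, x ^ (a-1) * (1-x) ^ (b-1) : ℝ) : ℂ) := by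
    rw [Complex.betaIntegral, intervalIntegral.integral_of_le (by norm_num : (0:ℝ) ≤ 1),
      MeasureTheory.integral_Ioc_eq_integral_Ioo]
    have h0 : ((∫ x in Set.Ioo (0:ℝ) 1, x ^ (a-1) * (1-x) ^ (b-1) : ℝ) : ℂ)
        = ∫ x in Set.Ioo (0:ℝ) 1, ((x ^ (a-1) * (1-x) ^ (b-1) : ℝ) : ℂ) :=
      (integral_ofReal (𝕜 := ℂ)).symm
    rw [h0]
    refine setIntegral_congr_fun measurableSet_Ioo (fun x hx => ?_)
    rw [Complex.ofReal_mul, Complex.ofReal_cpow hx.1.le,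
      Complex.ofReal_cpow (by linarith [hx.2] : (0:ℝ) ≤ 1 - x)]
    push_cast
    ring
  have hG := Complex.Gamma_mul_Gamma_eq_betaIntegral
    (s := (a:ℂ)) (t := (b:ℂ)) (by simpa using ha) (by simpa using hb)
  rw [key, ← Complex.ofReal_add, Complex.Gamma_ofReal, Complex.Gamma_ofReal,
    Complex.Gamma_ofReal, ← Complex.ofReal_mul, ← Complex.ofReal_mul] at hG
  have h2 := Complex.ofReal_injective hG
  have hab : Real.Gamma (a+b) ≠ 0 := (Real.Gamma_pos_of_pos (by linarith)).ne'
  field_simp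
  linarith [h2]

lemma betaMoment (a b : ℝ) (ha : 0 < a) (hb : 0 < b) (p q : ℕ) :
    ∫ x, x ^ p * (1-x) ^ q ∂(_root_.betaMeasure a b)
      = Real.Gamma (a+b) * Real.Gamma (a+p) * Real.Gamma (b+q) /
        (Real.Gamma a * Real.Gamma b * Real.Gamma (a+b+p+q)) := by
  set C : ℝ := Real.Gamma (a + b) / (Real.Gamma a * Real.Gamma b) with hC
  have hρmeas : Measurable fun x : ℝ =>
      (C * x ^ (a - 1) * (1 - x) ^ (b - 1)).toNNReal := by
    apply Measurable.real_toNNReal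
    fun_prop
  have hμ : _root_.betaMeasure a b = (volume.restrict (Set.Ioo (0 : ℝ) 1)).withDensity
      fun x => ((C * x ^ (a - 1) * (1 - x) ^ (b - 1)).toNNReal : ℝ≥0∞) := rfl
  rw [hμ, integral_withDensity_eq_integral_smul hρmeas]
  have hcong : ∀ x ∈ Set.Ioo (0:ℝ) 1,
      (C * x ^ (a - 1) * (1 - x) ^ (b - 1)).toNNReal • (x ^ p * (1-x) ^ q)
        = C * (x ^ ((a+p)-1) * (1-x) ^ ((b+q)-1)) := by
    intro x hx
    have hx0 : (0:ℝ) < x := hx.1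
    have hx1 : (0:ℝ) < 1 - x := by linarith [hx.2]
    have hd0 : 0 ≤ C * x ^ (a - 1) * (1 - x) ^ (b - 1) := by
      have hC0 : 0 ≤ C := le_of_lt <| div_pos (Real.Gamma_pos_of_pos (by linarith))
        (mul_pos (Real.Gamma_pos_of_pos ha) (Real.Gamma_pos_of_pos hb))
      have h1 : (0:ℝ) ≤ x ^ (a-1) := Real.rpow_nonneg hx0.le _
      have h2 : (0:ℝ) ≤ (1-x) ^ (b-1) := Real.rpow_nonneg hx1.le _
      positivity
    rw [NNReal.smul_def, Real.coe_toNNReal _ hd0]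
    rw [show (x:ℝ) ^ p = x ^ (p:ℝ) from (Real.rpow_natCast x p).symm,
      show (1-x:ℝ) ^ q = (1-x) ^ (q:ℝ) from (Real.rpow_natCast _ q).symm]
    rw [show (a+p)-1 = (a-1) + p by ring, show (b+q)-1 = (b-1) + q by ring,
      Real.rpow_add hx0, Real.rpow_add hx1, smul_eq_mul]
    ring
  rw [setIntegral_congr_fun measurableSet_Ioo hcong, MeasureTheory.integral_const_mul,
    realBeta _ _ (by positivity) (by positivity)]
  have h1 : Real.Gamma a ≠ 0 := (Real.Gamma_pos_of_pos ha).ne'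
  have h2 : Real.Gamma b ≠ 0 := (Real.Gamma_pos_of_pos hb).ne'
  have h3 : Real.Gamma ((a+p)+(b+q)) ≠ 0 :=
    (Real.Gamma_pos_of_pos (by positivity)).ne'
  rw [hC, show a+b+(p:ℝ)+(q:ℝ) = (a+p)+(b+q) by ring]
  field_simp

lemma Gamma_shift2 (a : ℝ) (ha : 0 < a) :
    Real.Gamma (a+2) = (a+1)*a*Real.Gamma a := by
  rw [show a+2 = (a+1)+1 by ring, Real.Gamma_add_one (by positivity),
    Real.Gamma_add_one ha.ne']
  ring

lemma beta_int_x2 (a b : ℝ) (ha : 0 < a) (hb : 0 < b) :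
    ∫ x, x ^ 2 ∂(_root_.betaMeasure a b) = a*(a+1)/((a+b)*(a+b+1)) := by
  have h := betaMoment a b ha hb 2 0
  simp only [pow_zero, mul_one, Nat.cast_ofNat, Nat.cast_zero, add_zero] at h
  rw [h, Gamma_shift2 a ha, Gamma_shift2 (a+b) (by positivity)]
  have h1 : Real.Gamma a ≠ 0 := (Real.Gamma_pos_of_pos ha).ne'
  have h2 : Real.Gamma b ≠ 0 := (Real.Gamma_pos_of_pos hb).ne'
  have h3 : Real.Gamma (a+b) ≠ 0 := (Real.Gamma_pos_of_pos (by positivity)).ne'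
  have h4 : a+b ≠ 0 := by positivity
  have h5 : a+b+1 ≠ 0 := by positivity
  field_simp

lemma beta_int_1x2 (a b : ℝ) (ha : 0 < a) (hb : 0 < b) :
    ∫ x, (1-x) ^ 2 ∂(_root_.betaMeasure a b) = b*(b+1)/((a+b)*(a+b+1)) := by
  have h := betaMoment a b ha hb 0 2
  simp only [pow_zero, one_mul, Nat.cast_ofNat, Nat.cast_zero, add_zero] at h
  rw [h, Gamma_shift2 b hb, Gamma_shift2 (a+b) (by positivity)]
  have h1 : Real.Gamma a ≠ 0 := (Real.Gamma_pos_of_pos ha).ne'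
  have h2 : Real.Gamma b ≠ 0 := (Real.Gamma_pos_of_pos hb).ne'
  have h3 : Real.Gamma (a+b) ≠ 0 := (Real.Gamma_pos_of_pos (by positivity)).ne'
  have h4 : a+b ≠ 0 := by positivity
  have h5 : a+b+1 ≠ 0 := by positivity
  field_simp

/-- For a GEM(α, θ) stick-breaking sequence
`P_i = Z_i ∏_{j<i} (1 - Z_j)` (with `0 ≤ α < 1`, `θ > 0`), one has
`∑_i E[P_i²] = (1 - α)/(1 + θ)`.  (For `α = χ/(χ+ρ)`, `θ = ρ/(χ+ρ)` this equals
`ρ/(χ + 2ρ)`.) -/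
theorem stmt8_GEM_sum_of_squares {Ω : Type*} [MeasurableSpace Ω]
    (μ : Measure Ω) [IsProbabilityMeasure μ] (α θ : ℝ)
    (hα0 : 0 ≤ α) (hα1 : α < 1) (hθ : 0 < θ)
    (Z : ℕ → Ω → ℝ)
    (hmeas : ∀ j, Measurable (Z j))
    (hrange : ∀ j, ∀ ω, Z j ω ∈ Set.Icc (0 : ℝ) 1)
    (hindep : iIndepFun Z μ)
    (hlaw : ∀ j : ℕ, Measure.map (Z j) μ = _root_.betaMeasure (1 - α) (θ + (j + 1) * α))
    (P : ℕ → Ω → ℝ)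
    (hP : ∀ i ω, P i ω = Z i ω * ∏ j ∈ Finset.range i, (1 - Z j ω)) :
    (∑' i : ℕ, ∫ ω, (P i ω) ^ 2 ∂μ) = (1 - α) / (1 + θ) := by
  have hjα : ∀ j : ℕ, (0:ℝ) ≤ (j:ℝ) * α := fun j => mul_nonneg (Nat.cast_nonneg j) hα0
  have ha : (0:ℝ) < 1 - α := by linarith
  have hb : ∀ j : ℕ, (0:ℝ) < θ + ((j:ℝ) + 1) * α := fun j => by nlinarith [hjα j]
  have h1θ : ∀ j : ℕ, (0:ℝ) < 1 + θ + j * α := fun j => by nlinarith [hjα j]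
  have h2θ : ∀ j : ℕ, (0:ℝ) < 2 + θ + j * α := fun j => by nlinarith [hjα j]
  have hθα : ∀ j : ℕ, (0:ℝ) < θ + α + j * α := fun j => by nlinarith [hjα j]
  -- the moment values
  set e : ℕ → ℝ := fun i => (1-α)*(2-α)/((1 + θ + i*α)*(2 + θ + i*α)) with he
  set c : ℕ → ℝ := fun j =>
    (θ + (j+1)*α) * (1 + θ + (j+1)*α) / ((1 + θ + j*α) * (2 + θ + j*α)) with hc
  have hZ2 : ∀ i : ℕ, ∫ ω, (Z i ω) ^ 2 ∂μ = e i := by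
    intro i
    have h1 : ∫ ω, (Z i ω) ^ 2 ∂μ = ∫ x, x ^ 2 ∂(Measure.map (Z i) μ) :=
      (integral_map (hmeas i).aemeasurable
        ((measurable_id.pow_const 2).aestronglyMeasurable)).symm
    rw [h1, hlaw i, beta_int_x2 _ _ ha (hb i), he]
    have d1 : (1 - α + (θ + ((i:ℝ) + 1) * α)) = 1 + θ + i*α := by ring
    have d2 : (1 - α + (θ + ((i:ℝ) + 1) * α) + 1) = 2 + θ + i*α := by ring
    rw [d2, d1]
    simp only [he]
    ring_nf
  have hY2 : ∀ j : ℕ, ∫ ω, (1 - Z j ω) ^ 2 ∂μ = c j := by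
    intro j
    have h1 : ∫ ω, (1 - Z j ω) ^ 2 ∂μ = ∫ x, (1-x) ^ 2 ∂(Measure.map (Z j) μ) :=
      (integral_map (hmeas j).aemeasurable
        (((measurable_const.sub measurable_id).pow_const 2).aestronglyMeasurable)).symm
    rw [h1, hlaw j, beta_int_1x2 _ _ ha (hb j), hc]
    have d1 : (1 - α + (θ + ((j:ℝ) + 1) * α)) = 1 + θ + j*α := by ring
    have d2 : (1 - α + (θ + ((j:ℝ) + 1) * α) + 1) = 2 + θ + j*α := by ring
    rw [d2, d1]
    simp only [hc]
    ring_nf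
  -- the product structure
  set Y : ℕ → Ω → ℝ := fun j ω => (1 - Z j ω) ^ 2 with hYdef
  have hYmeas : ∀ j, Measurable (Y j) := fun j =>
    (measurable_const.sub (hmeas j)).pow_const 2
  have hY01 : ∀ j ω, Y j ω ∈ Set.Icc (0:ℝ) 1 := by
    intro j ω
    obtain ⟨u1, u2⟩ := hrange j ω
    refine ⟨sq_nonneg _, ?_⟩
    show (1 - Z j ω) ^ 2 ≤ 1
    nlinarith
  have hYint : ∀ j, Integrable (Y j) μ := by
    intro j
    refine (integrable_const (1:ℝ)).mono' (hYmeas j).aestronglyMeasurable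
      (ae_of_all _ fun ω => ?_)
    rw [Real.norm_eq_abs, abs_of_nonneg (hY01 j ω).1]
    exact (hY01 j ω).2
  have hYprodint : ∀ n, Integrable (fun ω => ∏ j ∈ range n, Y j ω) μ := by
    intro n
    refine (integrable_const (1:ℝ)).mono'
      ((Finset.measurable_prod (range n) (fun j _ => hYmeas j)).aestronglyMeasurable)
      (ae_of_all _ fun ω => ?_)
    rw [Real.norm_eq_abs, abs_of_nonneg (Finset.prod_nonneg fun j _ => (hY01 j ω).1)]
    exact Finset.prod_le_one (fun j _ => (hY01 j ω).1) (fun j _ => (hY01 j ω).2)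
  have hYindep : iIndepFun Y μ :=
    hindep.comp (fun _ x => (1 - x) ^ 2)
      (fun _ => (measurable_const.sub measurable_id).pow_const 2)
  have hmul : ∀ n, ∫ ω, ∏ j ∈ range n, Y j ω ∂μ = ∏ j ∈ range n, ∫ ω, Y j ω ∂μ := by
    intro n
    induction n with
    | zero => simp
    | succ n ih =>
      have hpi : (∏ j ∈ range n, Y j) = fun ω => ∏ j ∈ range n, Y j ω :=
        funext fun ω => Finset.prod_apply ω _ _
      have hint := (hYindep.indepFun_prod_range_succ hYmeas n).integral_mul_eq_mul_integral
        (hpi ▸ (hYprodint n).1) (hYint n).1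
      rw [hpi] at hint
      simp only [prod_range_succ]
      rw [← ih]
      exact hint
  -- expectation of P i squared
  have hEP : ∀ i, ∫ ω, (P i ω) ^ 2 ∂μ = e i * ∏ j ∈ range i, c j := by
    intro i
    classical
    set g : ℕ → ℝ → ℝ := fun j => if j = i then (fun x => x ^ 2) else fun x => (1-x)^2
      with hg
    have hgmeas : ∀ j, Measurable (g j) := by
      intro j
      by_cases h : j = i <;> simp only [hg, h, if_true, if_false, if_neg] <;> fun_prop
    set W : ℕ → Ω → ℝ := fun j => g j ∘ Z j with hW
    have hWindep : iIndepFun W μ := hindep.comp g hgmeas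
    have hWmeas : ∀ j, Measurable (W j) := fun j => (hgmeas j).comp (hmeas j)
    have hind := hWindep.indepFun_prod_range_succ hWmeas i
    have hWprod : (∏ j ∈ range i, W j) = fun ω => ∏ j ∈ range i, Y j ω := by
      funext ω
      rw [Finset.prod_apply]
      refine Finset.prod_congr rfl fun j hj => ?_
      have : j ≠ i := (mem_range.mp hj).ne
      simp [hW, hg, this, hYdef]
    have hWi : W i = fun ω => (Z i ω) ^ 2 := by
      funext ω; simp [hW, hg]
    rw [hWprod, hWi] at hind
    have hZint : Integrable (fun ω => (Z i ω) ^ 2) μ := by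
      refine (integrable_const (1:ℝ)).mono'
        ((hmeas i).pow_const 2).aestronglyMeasurable (ae_of_all _ fun ω => ?_)
      obtain ⟨u1, u2⟩ := hrange i ω
      rw [Real.norm_eq_abs, abs_of_nonneg (sq_nonneg _)]
      nlinarith
    have hintmul := hind.integral_mul_eq_mul_integral (hYprodint i).1 hZint.1
    have hPrw : (fun ω => (P i ω) ^ 2)
        = fun ω => (∏ j ∈ range i, Y j ω) * (Z i ω) ^ 2 := by
      funext ω
      rw [hP i ω, mul_pow, ← Finset.prod_pow, mul_comm]
    rw [hPrw]
    have : (∫ ω, (∏ j ∈ range i, Y j ω) * (Z i ω) ^ 2 ∂μ)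
        = (∫ ω, ∏ j ∈ range i, Y j ω ∂μ) * ∫ ω, (Z i ω) ^ 2 ∂μ := by
      simpa [Pi.mul_apply] using hintmul
    rw [this, hmul i, hZ2 i, mul_comm]
    congr 1
    exact Finset.prod_congr rfl fun j _ => hY2 j
  -- the telescoping structure
  set r : ℕ → ℝ := fun j => (θ + α + j*α)/(2 + θ + j*α) with hrdef
  set G : ℕ → ℝ := fun i => ∏ j ∈ range i, r j with hGdef
  have hG0 : G 0 = 1 := by simp [hGdef]
  have hGsucc : ∀ i, G (i+1) = G i * r i := fun i => by
    simp [hGdef, prod_range_succ]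
  have hGc : ∀ i, ∏ j ∈ range i, c j = (1 + θ + i*α)/(1+θ) * G i := by
    intro i
    induction i with
    | zero =>
      simp [hG0]
      rw [div_self (by positivity : (1+θ:ℝ) ≠ 0)]
    | succ i ih =>
      rw [prod_range_succ, ih, hGsucc i]
      have hcast : ((i+1 : ℕ) : ℝ) = (i:ℝ) + 1 := by push_cast; ring
      rw [hc, hrdef, hcast]
      have n1 := (h1θ i).ne'
      have n2 := (h2θ i).ne'
      have n3 : (1+θ:ℝ) ≠ 0 := by positivity
      field_simp
      ring
  have hEK : ∀ i, e i * ∏ j ∈ range i, c j = (1-α)/(1+θ) * (G i - G (i+1)) := by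
    intro i
    rw [hGc i, hGsucc i, he, hrdef]
    have n1 := (h1θ i).ne'
    have n2 := (h2θ i).ne'
    have n3 : (1+θ:ℝ) ≠ 0 := by positivity
    field_simp
    ring
  -- G tends to zero
  have hrnonneg : ∀ j, 0 ≤ r j := fun j => le_of_lt (div_pos (hθα j) (h2θ j))
  have hrle1 : ∀ j, r j ≤ 1 := fun j =>
    (div_le_one (h2θ j)).mpr (by linarith [hjα j, hα1])
  have hGnonneg : ∀ i, 0 ≤ G i := fun i => Finset.prod_nonneg fun j _ => hrnonneg j
  have hGtend : Filter.Tendsto G Filter.atTop (nhds 0) := by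
    set cst : ℝ := (2-α)/(2+θ) with hcst
    have hcstpos : 0 < cst := div_pos (by linarith) (by linarith)
    have hbound : ∀ N, G N ≤ Real.exp (-(cst * ∑ j ∈ range N, (1:ℝ)/(j+1))) := by
      intro N
      have step1 : G N ≤ ∏ j ∈ range N, Real.exp ((α-2)/(2+θ+j*α)) := by
        refine Finset.prod_le_prod (fun j _ => hrnonneg j) (fun j _ => ?_)
        have hrev : r j = (α-2)/(2+θ+j*α) + 1 := by
          rw [hrdef]
          rw [div_add' _ _ _ (h2θ j).ne']
          congr 1
          ring
        rw [hrev]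
        exact Real.add_one_le_exp _
      rw [← Real.exp_sum] at step1
      refine step1.trans (Real.exp_le_exp.mpr ?_)
      have hterm : ∀ j ∈ range N, (α-2)/(2+θ+(j:ℝ)*α) ≤ -(cst * ((1:ℝ)/(j+1))) := by
        intro j _
        have e1 : (α-2)/(2+θ+(j:ℝ)*α) = -((2-α)/(2+θ+(j:ℝ)*α)) := by
          rw [← neg_div]
          congr 1
          ring
        have e2 : cst * ((1:ℝ)/(j+1)) = (2-α)/((2+θ)*((j:ℝ)+1)) := by
          rw [hcst, div_mul_div_comm, mul_one]
        rw [e1, e2]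
        refine neg_le_neg ?_
        have hle : (2:ℝ)+θ+(j:ℝ)*α ≤ (2+θ)*((j:ℝ)+1) := by
          nlinarith [mul_nonneg (Nat.cast_nonneg j : (0:ℝ) ≤ (j:ℝ))
            (by linarith : (0:ℝ) ≤ 2+θ-α)]
        exact div_le_div_of_nonneg_left (by linarith) (h2θ j) hle
      calc ∑ j ∈ range N, (α-2)/(2+θ+(j:ℝ)*α)
          ≤ ∑ j ∈ range N, -(cst * ((1:ℝ)/(j+1))) := Finset.sum_le_sum hterm
        _ = -(cst * ∑ j ∈ range N, (1:ℝ)/(j+1)) := by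
            rw [Finset.mul_sum, ← Finset.sum_neg_distrib]
    have hH := Real.tendsto_sum_range_one_div_nat_succ_atTop
    have h1 : Filter.Tendsto (fun N => -(cst * ∑ j ∈ range N, (1:ℝ)/(j+1)))
        Filter.atTop Filter.atBot := by
      rw [Filter.tendsto_neg_atBot_iff]
      exact hH.const_mul_atTop hcstpos
    have h2 := Real.tendsto_exp_atBot.comp h1
    exact squeeze_zero hGnonneg hbound h2
  have htermnonneg : ∀ i, 0 ≤ G i - G (i+1) := by
    intro i
    rw [hGsucc i]
    nlinarith [hGnonneg i, hrle1 i, hrnonneg i]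
  have hsum : HasSum (fun i => G i - G (i+1)) 1 := by
    rw [hasSum_iff_tendsto_nat_of_nonneg htermnonneg]
    have hps : ∀ n, ∑ i ∈ range n, (G i - G (i+1)) = 1 - G n := fun n => by
      rw [Finset.sum_range_sub' G n, hG0]
    simp only [hps]
    simpa using Filter.Tendsto.sub (tendsto_const_nhds (x := (1:ℝ))) hGtend
  calc (∑' i : ℕ, ∫ ω, (P i ω) ^ 2 ∂μ)
      = ∑' i : ℕ, (1-α)/(1+θ) * (G i - G (i+1)) :=
        tsum_congr fun i => by rw [hEP i, hEK i]
    _ = (1-α)/(1+θ) * 1 := by rw [tsum_mul_left, hsum.tsum_eq]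
    _ = (1-α)/(1+θ) := mul_one _
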